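/- Let $(A,\mathfrak{m})$ be a countable Noetherian local ring, $J$ an ideal of $A$, and $M$ an $A$-module that is complete with respect to the $J$-adic topology. Suppose $V(J) \subseteq \operatorname{Supp}(M)$. Then $\operatorname{Supp}(M) = V(\operatorname{Ann}_A(M))$. -/
import Mathlib

universe u

private lemma aux_anti {A : Type*} [CommRing A] (J : Ideal A) {M : Type*} [AddCommGroup M]
    [Module A M] {a b : ℕ} (h : a ≤ b) :
    (J ^ b • ⊤ : Submodule A M) ≤ J ^ a • ⊤ :=
  Submodule.smul_mono_left (Ideal.pow_le_pow_right h)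

private lemma aux_limit {A : Type*} [CommRing A] (J : Ideal A) {M : Type*} [AddCommGroup M]
    [Module A M] [IsPrecomplete J M] (m : ℕ → M) (n : ℕ → ℕ) (hmono : StrictMono n)
    (hstep : ∀ k, m (k + 1) - m k ∈ (J ^ n k • ⊤ : Submodule A M)) :
    ∃ L : M, ∀ k, L - m k ∈ (J ^ n k • ⊤ : Submodule A M) := by
  have hmem : ∀ k j, k ≤ j → m j - m k ∈ (J ^ n k • ⊤ : Submodule A M) := by
    intro k j hkj
    induction j, hkj using Nat.le_induction with
    | base => simp
    | succ j hkj ih =>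
      have h1 : m (j + 1) - m j ∈ (J ^ n k • ⊤ : Submodule A M) :=
        aux_anti J (hmono.monotone hkj) (hstep j)
      have := Submodule.add_mem _ h1 ih
      simpa using this
  have hex : ∀ i : ℕ, ∃ k, i ≤ n k := fun i => ⟨i, hmono.le_apply⟩
  have hKs : ∀ i, i ≤ n (Nat.find (hex i)) := fun i => Nat.find_spec (hex i)
  have hcau : ∀ {a b : ℕ}, a ≤ b →
      m (Nat.find (hex a)) ≡ m (Nat.find (hex b)) [SMOD (J ^ a • ⊤ : Submodule A M)] := by
    intro a b hab
    rw [SModEq.sub_mem]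
    have hKab : Nat.find (hex a) ≤ Nat.find (hex b) :=
      Nat.find_mono (fun k hk => hab.trans hk)
    have := Submodule.neg_mem _ (hmem _ _ hKab)
    rw [neg_sub] at this
    exact aux_anti J (hKs a) this
  obtain ⟨L, hL⟩ := IsPrecomplete.prec ‹IsPrecomplete J M› hcau
  refine ⟨L, fun k => ?_⟩
  have h1 : Nat.find (hex (n k)) ≤ k := Nat.find_le le_rfl
  have h2 : k ≤ Nat.find (hex (n k)) := hmono.le_iff_le.mp (hKs (n k))
  have hKnk : Nat.find (hex (n k)) = k := le_antisymm h1 h2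
  have := SModEq.sub_mem.mp (hL (n k))
  rw [hKnk] at this
  have := Submodule.neg_mem _ this
  rwa [neg_sub] at this

/-- For a countable Noetherian local ring `A`, an ideal `J`, and a `J`-adically complete
module `M` with `V(J) ⊆ Supp M`, the support of `M` equals the zero locus of its
annihilator. -/
theorem support_eq_zeroLocus_annihilator_of_adicComplete
    (A : Type u) [CommRing A] [IsLocalRing A] [IsNoetherianRing A] [Countable A]
    (J : Ideal A) (M : Type u) [AddCommGroup M] [Module A M]
    [IsAdicComplete J M]
    (hJ : PrimeSpectrum.zeroLocus (J : Set A) ⊆ Module.support A M) :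
    Module.support A M = PrimeSpectrum.zeroLocus (Module.annihilator A M : Set A) := by
  classical
  apply subset_antisymm
  · exact fun p hp => (PrimeSpectrum.mem_zeroLocus _ _).mpr (Module.annihilator_le_of_mem_support hp)
  intro p hp
  have hpann : (Module.annihilator A M : Set A) ⊆ p.asIdeal := (PrimeSpectrum.mem_zeroLocus _ _).mp hp
  by_cases hcase : ∃ s ∉ p.asIdeal, ∃ n : ℕ, ∀ x ∈ (J ^ n • ⊤ : Submodule A M), s • x = 0
  · obtain ⟨s, hs, n, hsn⟩ := hcase
    apply hJ
    rw [PrimeSpectrum.mem_zeroLocus _ _]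
    intro a ha
    have hmem : s * a ^ n ∈ Module.annihilator A M := by
      rw [Module.mem_annihilator]
      intro x
      have hx : (a ^ n) • x ∈ (J ^ n • ⊤ : Submodule A M) :=
        Submodule.smul_mem_smul (Ideal.pow_mem_pow ha n) trivial
      rw [mul_smul]
      exact hsn _ hx
    have : s * a ^ n ∈ p.asIdeal := hpann hmem
    exact p.isPrime.mem_of_pow_mem n ((p.isPrime.mem_or_mem this).resolve_left hs)
  · push_neg at hcase
    have hdense : ∀ s, s ∉ p.asIdeal → ∀ (n : ℕ) (m : M),
        ∃ x, x ∈ (J ^ n • ⊤ : Submodule A M) ∧ s • (m + x) ≠ 0 := by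
      intro s hs n m
      by_cases hm : s • m = 0
      · obtain ⟨x, hx, hx'⟩ := hcase s hs n
        exact ⟨x, hx, by rwa [smul_add, hm, zero_add]⟩
      · exact ⟨0, Submodule.zero_mem _, by simpa using hm⟩
    have hhaus : ∀ y : M, y ≠ 0 → ∃ n : ℕ, y ∉ (J ^ n • ⊤ : Submodule A M) := by
      intro y hy
      by_contra h
      push_neg at h
      exact hy (IsHausdorff.haus ‹IsAdicComplete J M›.toIsHausdorff y
        (fun n => SModEq.sub_mem.mpr (by simpa using h n)))
    choose x hx1 hx2 using hdense
    choose N hN using hhaus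
    obtain ⟨f, hf⟩ := exists_surjective_nat A
    obtain ⟨F, hFs⟩ : ∃ F : ℕ → M × ℕ,
        ∀ k, F (k + 1) = if h : f k ∉ p.asIdeal then
          ((F k).1 + x (f k) h (F k).2 (F k).1,
            max (N (f k • ((F k).1 + x (f k) h (F k).2 (F k).1)) (hx2 _ h _ _)) (F k).2 + 1)
        else ((F k).1, (F k).2 + 1) :=
      ⟨fun k => Nat.rec ((0 : M), (0 : ℕ)) (fun k ih =>
        if h : f k ∉ p.asIdeal then
          (ih.1 + x (f k) h ih.2 ih.1,
            max (N (f k • (ih.1 + x (f k) h ih.2 ih.1)) (hx2 _ h _ _)) ih.2 + 1)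
        else (ih.1, ih.2 + 1)) k, fun k => rfl⟩
    have hstep : ∀ k, (F (k + 1)).1 - (F k).1 ∈ (J ^ (F k).2 • ⊤ : Submodule A M) := by
      intro k
      rw [hFs k]
      split_ifs with h
      · show (F k).1 - (F k).1 ∈ _
        rw [sub_self]
        exact Submodule.zero_mem _
      · simpa using hx1 (f k) h (F k).2 (F k).1
    have hlt : ∀ k, (F k).2 < (F (k + 1)).2 := by
      intro k
      rw [hFs k]
      split_ifs with h
      · dsimp only
        exact Nat.lt_succ_self _
      · dsimp only
        exact Nat.lt_succ_of_le (le_max_right _ _)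
    obtain ⟨L, hL⟩ := aux_limit J (fun k => (F k).1) (fun k => (F k).2)
      (strictMono_nat_of_lt_succ hlt) hstep
    rw [Module.mem_support_iff']
    refine ⟨L, fun r hr => ?_⟩
    obtain ⟨k, rfl⟩ := hf r
    intro hcontra
    set m' : M := (F k).1 + x (f k) hr (F k).2 (F k).1 with hm'def
    have hm' : f k • m' ≠ 0 := hx2 _ hr _ _
    have h1 : (F (k + 1)).1 = m' := by rw [hFs k, dif_pos hr]
    have h2 : N (f k • m') hm' ≤ (F (k + 1)).2 := by
      rw [hFs k, dif_pos hr]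
      dsimp only
      exact le_trans (le_max_left _ _) (Nat.le_succ _)
    have hLm : L - m' ∈ (J ^ (F (k + 1)).2 • ⊤ : Submodule A M) := h1 ▸ hL (k + 1)
    have : f k • (L - m') ∈ (J ^ (F (k + 1)).2 • ⊤ : Submodule A M) :=
      Submodule.smul_mem _ _ hLm
    rw [smul_sub, hcontra, zero_sub] at this
    have hfin : f k • m' ∈ (J ^ N (f k • m') hm' • ⊤ : Submodule A M) := by
      have := Submodule.neg_mem _ this
      rw [neg_neg] at this
      exact aux_anti J h2 this
    exact hN _ hm' hfin
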